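/- Let c₁ and c₂ be real numbers with 0 < c₁ < 1 and 0 < c₂ < 1, let n be a positive natural number such that m := c₁·n is a positive integer, and let D be a positive real number. If q₁, …, q_m are natural numbers satisfying Σ_{i=1}^{m} D / 3^{qᵢ} ≤ c₂·n, then Σ_{i=1}^{m} qᵢ ≥ c₁·n·( log₃ D + log₃(c₁/c₂) ), where log₃ denotes the base-3 real logarithm (Real.logb 3). -/

import Mathlib

/-- The lower bound for the `n`-player instance with `c₁n` humble players whose
pieces have total volume at most `c₂n`: the total number of queries is at least
`c₁n(log₃ D + log₃(c₁/c₂))`. -/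
theorem lower_bound_humble_players
    (c₁ c₂ : ℝ) (hc₁ : 0 < c₁) (hc₁' : c₁ < 1) (hc₂ : 0 < c₂) (hc₂' : c₂ < 1)
    (n : ℕ) (hn : 0 < n) (m : ℕ) (hm : 0 < m) (hmn : (m : ℝ) = c₁ * n)
    (D : ℝ) (hD : 0 < D) (q : Fin m → ℕ)
    (h : ∑ i, D / 3 ^ (q i) ≤ c₂ * n) :
    c₁ * n * (Real.logb 3 D + Real.logb 3 (c₁ / c₂)) ≤ ∑ i, (q i : ℝ) := by
  have hm0 : (0:ℝ) < m := Nat.cast_pos.mpr hm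
  have h3 : (0:ℝ) < Real.log 3 := Real.log_pos (by norm_num)
  -- Jensen for concave log
  have hjen := (strictConcaveOn_log_Ioi.concaveOn).le_map_sum
    (t := Finset.univ) (w := fun _ : Fin m => (m:ℝ)⁻¹)
    (p := fun i => D / 3 ^ (q i))
    (fun i _ => by positivity)
    (by simp [Finset.card_univ]; field_simp)
    (fun i _ => by
      simp only [Set.mem_Ioi]
      positivity)
  simp only [smul_eq_mul, ← Finset.mul_sum] at hjen
  -- bound the RHS
  have hsum_pos : (0:ℝ) < ∑ i, D / 3 ^ (q i) :=
    Finset.sum_pos (fun i _ => by positivity) ⟨⟨0, hm⟩, Finset.mem_univ _⟩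
  have h2 : Real.log ((m:ℝ)⁻¹ * ∑ i, D / 3 ^ (q i)) ≤ Real.log (c₂ / c₁) := by
    apply Real.log_le_log (by positivity)
    rw [inv_mul_le_iff₀ hm0, hmn]
    calc ∑ i, D / 3 ^ (q i) ≤ c₂ * n := h
      _ = c₁ * ↑n * (c₂ / c₁) := by field_simp
  -- compute log of each term
  have hlog : ∀ i : Fin m, Real.log (D / 3 ^ (q i)) = Real.log D - (q i : ℝ) * Real.log 3 := by
    intro i
    rw [Real.log_div (ne_of_gt hD) (by positivity), Real.log_pow]
  have key : (m:ℝ)⁻¹ * (↑m * Real.log D - (∑ i, (q i : ℝ)) * Real.log 3)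
      ≤ Real.log (c₂ / c₁) := by
    refine le_trans (le_of_eq ?_) (hjen.trans h2)
    congr 1
    rw [Finset.sum_congr rfl (fun i _ => hlog i), Finset.sum_sub_distrib,
      Finset.sum_const, Finset.card_univ, Fintype.card_fin, ← Finset.sum_mul]
    simp
  -- rearrange
  have key2 : (m:ℝ) * Real.log D - (∑ i, (q i : ℝ)) * Real.log 3
      ≤ (m:ℝ) * Real.log (c₂ / c₁) := by
    have := mul_le_mul_of_nonneg_left key (le_of_lt hm0)
    rwa [mul_inv_cancel_left₀ (ne_of_gt hm0)] at this
  have hlogc : Real.log (c₂ / c₁) = - Real.log (c₁ / c₂) := by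
    rw [← Real.log_inv, inv_div]
  rw [Real.logb, Real.logb, ← add_div, div_eq_inv_mul, ← hmn, ← mul_assoc,
    mul_comm _ (Real.log 3)⁻¹, mul_assoc, inv_mul_le_iff₀ h3, mul_comm (Real.log 3)]
  nlinarith [key2, hlogc]
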